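/- Let 𝔰 be a Lie algebra over a field K of characteristic zero and let 𝔳 be a full 𝔰-module. Define 𝔥(𝔳) = 𝔳 ⊕ Alt_𝔰(𝔳)* with bracket [(x,z),(x',z')] = (0, e_{x,x'}) where e_{x,x'}(φ) = φ(x,x') for φ ∈ Alt_𝔰(𝔳) (the space of 𝔰-invariant alternating bilinear forms on 𝔳), and 𝔰-action [s,(x,z)] = ([s,x],0). Then 𝔥(𝔳) is a 2-nilpotent Lie 𝔰-algebra satisfying [𝔰,𝔥(𝔳)] = 𝔥(𝔳) and [𝔰, D𝔥(𝔳)] = 0. -/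

import Mathlib

set_option maxHeartbeats 1000000
set_option synthInstance.maxHeartbeats 200000

attribute [local instance 100] LieRing.ofAssociativeRing


/-- The space of `𝔰`-invariant alternating bilinear forms on a module `V` with
`𝔰`-action given by `ρ`. -/
def altInv (K S V : Type*) [Field K] [LieRing S] [LieAlgebra K S]
    [AddCommGroup V] [Module K V] (ρ : S →ₗ⁅K⁆ Module.End K V) :
    Submodule K (V →ₗ[K] V →ₗ[K] K) where
  carrier := {φ | (∀ x, φ x x = 0) ∧ ∀ (s : S) (x y : V), φ (ρ s x) y + φ x (ρ s y) = 0}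
  add_mem' := by
    rintro a b ⟨ha1, ha2⟩ ⟨hb1, hb2⟩
    refine ⟨fun x => ?_, fun s x y => ?_⟩
    · simp [ha1 x, hb1 x]
    · simp only [LinearMap.add_apply]
      linear_combination ha2 s x y + hb2 s x y
  zero_mem' := by
    refine ⟨fun x => rfl, fun s x y => ?_⟩
    simp
  smul_mem' := by
    rintro c a ⟨ha1, ha2⟩
    refine ⟨fun x => ?_, fun s x y => ?_⟩
    · simp [ha1 x]
    · simp only [LinearMap.smul_apply, smul_eq_mul]
      linear_combination c * ha2 s x y
/-- The element `e_{x,y}` of the dual of `Alt_𝔰(V)`, given by evaluation `φ ↦ φ(x,y)`. -/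
def eMap (K S V : Type*) [Field K] [LieRing S] [LieAlgebra K S]
    [AddCommGroup V] [Module K V] (ρ : S →ₗ⁅K⁆ Module.End K V) (x y : V) :
    (altInv K S V ρ) →ₗ[K] K where
  toFun φ := φ.1 x y
  map_add' a b := rfl
  map_smul' c a := rfl

/-- For a full `𝔰`-module `𝔳`, the space `𝔥(𝔳) = 𝔳 ⊕ Alt_𝔰(𝔳)*` with
bracket `[(x,z),(x',z')] = (0, e_{x,x'})` and `𝔰`-action `[s,(x,z)] = ([s,x],0)` is a
2-nilpotent Lie `𝔰`-algebra (the bracket is alternating, bilinear, satisfies the Jacobi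
identity, triple brackets vanish, and `𝔰` acts by derivations), satisfying
`[𝔰, 𝔥(𝔳)] = 𝔥(𝔳)` (the smallest subspace containing all `[s,h]` and closed under the
bracket is everything) and `[𝔰, D𝔥(𝔳)] = 0`. -/
theorem stmt4 (K S V : Type*) [Field K] [CharZero K] [LieRing S] [LieAlgebra K S]
    [AddCommGroup V] [Module K V] [FiniteDimensional K V]
    (ρ : S →ₗ⁅K⁆ Module.End K V)
    (hcr : ∀ p : Submodule K V, (∀ s : S, ∀ x ∈ p, ρ s x ∈ p) →
      ∃ q : Submodule K V, (∀ s : S, ∀ x ∈ q, ρ s x ∈ q) ∧ IsCompl p q)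
    (hfull : ∀ x : V, (∀ s : S, ρ s x = 0) → x = 0) :
    -- the bracket and the action on H = V × Alt_𝔰(V)*
    letI H := V × ((altInv K S V ρ) →ₗ[K] K)
    letI b : H → H → H := fun p q => (0, eMap K S V ρ p.1 q.1)
    letI σ : S → H → H := fun s p => (ρ s p.1, 0)
    -- bracket is bilinear
    (∀ (c : K) (x y z : H), b (c • x + y) z = c • b x z + b y z
                          ∧ b z (c • x + y) = c • b z x + b z y) ∧
    -- alternating
    (∀ x : H, b x x = 0) ∧
    -- Jacobi identity and 2-nilpotency
    (∀ x y z : H, b x (b y z) + b y (b z x) + b z (b x y) = 0) ∧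
    (∀ x y z : H, b x (b y z) = 0) ∧
    -- σ is a (linear) action by derivations
    (∀ (s : S) (c : K) (x y : H), σ s (c • x + y) = c • σ s x + σ s y) ∧
    (∀ (s : S) (x y : H), σ s (b x y) = b (σ s x) y + b x (σ s y)) ∧
    -- [𝔰, D𝔥(𝔳)] = 0
    (∀ (s : S) (x y : H), σ s (b x y) = 0) ∧
    -- [𝔰, 𝔥(𝔳)] = 𝔥(𝔳)
    (∀ p : Submodule K H, (∀ (s : S) (h : H), σ s h ∈ p) →
      (∀ x ∈ p, ∀ y ∈ p, b x y ∈ p) → p = ⊤) := by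
  have heV : ∀ (c : K) (x y z : V), eMap K S V ρ (c • x + y) z
      = c • eMap K S V ρ x z + eMap K S V ρ y z := by
    intro c x y z; ext φ; simp [eMap]
  have heV' : ∀ (c : K) (x y z : V), eMap K S V ρ z (c • x + y)
      = c • eMap K S V ρ z x + eMap K S V ρ z y := by
    intro c x y z; ext φ; simp [eMap]
  have healt : ∀ x : V, eMap K S V ρ x x = 0 := by
    intro x; ext φ; simpa [eMap] using φ.2.1 x
  have he0 : ∀ x : V, eMap K S V ρ 0 x = 0 := by
    intro x; ext φ; simp [eMap]
  have he0' : ∀ x : V, eMap K S V ρ x 0 = 0 := by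
    intro x; ext φ; simp [eMap]
  have hinv : ∀ (s : S) (x y : V),
      eMap K S V ρ (ρ s x) y + eMap K S V ρ x (ρ s y) = 0 := by
    intro s x y; ext φ; simpa [eMap] using φ.2.2 s x y
  refine ⟨?_, ?_, ?_, ?_, ?_, ?_, ?_, ?_⟩
  · intro c x y z
    constructor
    · simp only [Prod.smul_mk, Prod.mk_add_mk, smul_zero, add_zero]
      exact Prod.ext rfl (heV c x.1 y.1 z.1)
    · simp only [Prod.smul_mk, Prod.mk_add_mk, smul_zero, add_zero]
      exact Prod.ext rfl (heV' c x.1 y.1 z.1)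
  · intro x; exact Prod.ext rfl (healt x.1)
  · intro x y z
    refine Prod.ext (by simp) ?_
    simp [he0']
  · intro x y z
    exact Prod.ext (by simp) (by simpa using he0' x.1)
  · intro s c x y
    simp only [Prod.smul_mk, Prod.mk_add_mk, smul_zero, add_zero]
    exact Prod.ext (by simp) rfl
  · intro s x y
    simp only [Prod.mk_add_mk, map_zero, zero_add]
    refine Prod.ext (by simp) ?_
    simpa using (hinv s x.1 y.1).symm
  · intro s x y
    exact Prod.ext (by simp) rfl
  · intro p hσ hb
    -- first: V × {0} ⊆ p
    have hWinv : ∀ s : S, ∀ x ∈ LinearMap.range (ρ s), True := fun _ _ _ => trivial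
    set W : Submodule K V := ⨆ s : S, LinearMap.range ((ρ s : Module.End K V)) with hW
    have hWi : ∀ s : S, ∀ x ∈ W, ρ s x ∈ W := by
      intro s x _
      exact le_iSup (fun s : S => LinearMap.range ((ρ s : Module.End K V))) s ⟨x, rfl⟩
    obtain ⟨q, hq1, hq2⟩ := hcr W hWi
    have hq0 : q = ⊥ := by
      rw [eq_bot_iff]
      intro x hx
      have : x = 0 := by
        apply hfull
        intro s
        have h1 : ρ s x ∈ q := hq1 s x hx
        have h2 : ρ s x ∈ W :=
          le_iSup (fun s : S => LinearMap.range ((ρ s : Module.End K V))) s ⟨x, rfl⟩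
        have := hq2.inf_eq_bot
        have : ρ s x ∈ W ⊓ q := ⟨h2, h1⟩
        rwa [hq2.inf_eq_bot, Submodule.mem_bot] at this
      simp [this]
    have hWtop : W = ⊤ := by
      have := hq2.sup_eq_top
      rwa [hq0, sup_bot_eq] at this
    have hV0 : ∀ v : V, ((v, 0) : V × ((altInv K S V ρ) →ₗ[K] K)) ∈ p := by
      intro v
      have hle : W ≤ Submodule.comap (LinearMap.inl K V ((altInv K S V ρ) →ₗ[K] K)) p := by
        apply iSup_le
        rintro s _ ⟨x, rfl⟩
        exact hσ s (x, 0)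
      have := hle (hWtop ▸ Submodule.mem_top : v ∈ W)
      simpa using this
    -- second: {0} × Dual ⊆ p, via span of eMap's being ⊤
    have hz0 : ∀ z : (altInv K S V ρ) →ₗ[K] K, ((0, z) : V × ((altInv K S V ρ) →ₗ[K] K)) ∈ p := by
      intro z
      set E : Submodule K ((altInv K S V ρ) →ₗ[K] K) :=
        Submodule.span K (Set.range fun xy : V × V => eMap K S V ρ xy.1 xy.2) with hE
      letI : AddCommGroup (altInv K S V ρ) := @Submodule.addCommGroup K (V →ₗ[K] V →ₗ[K] K) _ LinearMap.addCommGroup _ (altInv K S V ρ)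
      haveI : FiniteDimensional K (altInv K S V ρ) := inferInstance
      haveI : Module.Free K (↥(altInv K S V ρ)) :=
        Module.Free.of_divisionRing K ↥(altInv K S V ρ)
      haveI : FiniteDimensional K ((altInv K S V ρ) →ₗ[K] K) :=
        Module.Finite.linearMap K K (↥(altInv K S V ρ)) K
      haveI hEfd : FiniteDimensional K E := FiniteDimensional.finiteDimensional_submodule E
      have hEtop : E = ⊤ := by
        have hco : E.dualCoannihilator = ⊥ := by
          rw [eq_bot_iff]
          intro φ hφ
          rw [Submodule.mem_dualCoannihilator] at hφ
          have : ∀ x y : V, φ.1 x y = 0 := by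
            intro x y
            have := hφ (eMap K S V ρ x y) (Submodule.subset_span ⟨(x, y), rfl⟩)
            simpa [eMap] using this
          have : (φ : V →ₗ[K] V →ₗ[K] K) = 0 := by
            ext x y; exact this x y
          exact Subtype.ext this
        have h2 := (@Subspace.dualCoannihilator_dualAnnihilator_eq K (altInv K S V ρ) _ _ _ E _).symm
        rwa [hco, Submodule.dualAnnihilator_bot] at h2
      have hle : E ≤ Submodule.comap
          (LinearMap.inr K V ((altInv K S V ρ) →ₗ[K] K)) p := by
        rw [Submodule.span_le]
        rintro _ ⟨⟨x, y⟩, rfl⟩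
        simpa using hb (x, 0) (hV0 x) (y, 0) (hV0 y)
      have := hle (hEtop ▸ Submodule.mem_top : z ∈ E)
      simpa using this
    rw [eq_top_iff]
    rintro ⟨v, z⟩ -
    have : ((v, z) : V × ((altInv K S V ρ) →ₗ[K] K)) = (v, 0) + (0, z) := by simp
    rw [this]
    exact p.add_mem (hV0 v) (hz0 z)
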